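/- Let a, b, c, α : (ξ, η) → ℝ be a maximal solution of the E(2) centrally flat ODE system a' = (a/2)(−a² + c²), b' = (b/2)(a² + c²), c' = (c/2)(a² − c² + 2α), α' = α·c², with a, b, c, α everywhere positive, where maximal means the solution does not extend to any strictly larger open interval. If 0 ≤ c(t)² − a(t)² ≤ 2α(t) for all t ∈ (ξ, η), then ξ = −∞, and there exists q ≥ 0 such that, as t → −∞, a(t) → q, b(t) → 0, c(t) → q, and α(t) → 0. -/

import Mathlib

/-- The E(2) centrally flat ODE system on a set `J`: `a' = (a/2)(−a² + c²)`,
`b' = (b/2)(a² + c²)`, `c' = (c/2)(a² − c² + 2α)`, `α' = α·c²`. -/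
def E2CentrallyFlatSystem (a b c α : ℝ → ℝ) (J : Set ℝ) : Prop :=
  (∀ t ∈ J, HasDerivAt a (a t / 2 * (-(a t) ^ 2 + (c t) ^ 2)) t) ∧
  (∀ t ∈ J, HasDerivAt b (b t / 2 * ((a t) ^ 2 + (c t) ^ 2)) t) ∧
  (∀ t ∈ J, HasDerivAt c (c t / 2 * ((a t) ^ 2 - (c t) ^ 2 + 2 * α t)) t) ∧
  (∀ t ∈ J, HasDerivAt α (α t * (c t) ^ 2) t)

/-- A solution of the E(2) centrally flat ODE system on an open interval `I` is maximal
if it does not extend to a solution of the same system on any open interval strictly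
containing `I`. -/
def E2MaximalSolution (a b c α : ℝ → ℝ) (I : Set ℝ) : Prop :=
  E2CentrallyFlatSystem a b c α I ∧
  ∀ J : Set ℝ, IsOpen J → J.OrdConnected → I ⊆ J → I ≠ J →
    ¬ ∃ a' b' c' α' : ℝ → ℝ, E2CentrallyFlatSystem a' b' c' α' J ∧
      Set.EqOn a' a I ∧ Set.EqOn b' b I ∧ Set.EqOn c' c I ∧ Set.EqOn α' α I

open Set Filter

noncomputable def F4 : ℝ × ℝ × ℝ × ℝ → ℝ × ℝ × ℝ × ℝ := fun x =>
  (x.1 / 2 * (-(x.1) ^ 2 + x.2.2.1 ^ 2),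
   x.2.1 / 2 * (x.1 ^ 2 + x.2.2.1 ^ 2),
   x.2.2.1 / 2 * (x.1 ^ 2 - x.2.2.1 ^ 2 + 2 * x.2.2.2),
   x.2.2.2 * x.2.2.1 ^ 2)

theorem F4_contDiff : ContDiff ℝ 1 F4 := by
  have : F4 = fun x : ℝ × ℝ × ℝ × ℝ =>
    (x.1 * (2:ℝ)⁻¹ * (-(x.1) ^ 2 + x.2.2.1 ^ 2),
     x.2.1 * (2:ℝ)⁻¹ * (x.1 ^ 2 + x.2.2.1 ^ 2),
     x.2.2.1 * (2:ℝ)⁻¹ * (x.1 ^ 2 - x.2.2.1 ^ 2 + 2 * x.2.2.2),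
     x.2.2.2 * x.2.2.1 ^ 2) := by
    funext x; simp only [F4]; norm_num [div_eq_mul_inv]
  rw [this]; fun_prop

theorem hasDerivAt_X4 {a b c α : ℝ → ℝ} {J : Set ℝ}
    (h : E2CentrallyFlatSystem a b c α J) {t : ℝ} (ht : t ∈ J) :
    HasDerivAt (fun s => (a s, b s, c s, α s)) (F4 (a t, b t, c t, α t)) t := by
  obtain ⟨h1, h2, h3, h4⟩ := h
  have := (h1 t ht).prodMk ((h2 t ht).prodMk ((h3 t ht).prodMk (h4 t ht)))
  convert this using 1
  rfl

theorem hasDerivAt_components {Z : ℝ → ℝ × ℝ × ℝ × ℝ} {v : ℝ × ℝ × ℝ × ℝ} {t : ℝ}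
    (h : HasDerivAt Z v t) :
    HasDerivAt (fun s => (Z s).1) v.1 t ∧ HasDerivAt (fun s => (Z s).2.1) v.2.1 t ∧
      HasDerivAt (fun s => (Z s).2.2.1) v.2.2.1 t ∧
      HasDerivAt (fun s => (Z s).2.2.2) v.2.2.2 t := by
  have h1 := (ContinuousLinearMap.fst ℝ ℝ (ℝ × ℝ × ℝ)).hasFDerivAt.comp_hasDerivAt t h
  have h2' := (ContinuousLinearMap.snd ℝ ℝ (ℝ × ℝ × ℝ)).hasFDerivAt.comp_hasDerivAt t h
  have h2 := (ContinuousLinearMap.fst ℝ ℝ (ℝ × ℝ)).hasFDerivAt.comp_hasDerivAt t h2'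
  have h3' := (ContinuousLinearMap.snd ℝ ℝ (ℝ × ℝ)).hasFDerivAt.comp_hasDerivAt t h2'
  have h3 := (ContinuousLinearMap.fst ℝ ℝ ℝ).hasFDerivAt.comp_hasDerivAt t h3'
  have h4 := (ContinuousLinearMap.snd ℝ ℝ ℝ).hasFDerivAt.comp_hasDerivAt t h3'
  simp only [ContinuousLinearMap.coe_fst', ContinuousLinearMap.coe_snd'] at h1 h2 h3 h4
  exact ⟨h1, h2, h3, h4⟩

private lemma monoOn_Iic_of_deriv {f f' : ℝ → ℝ} {t₀ : ℝ}
    (hf : ∀ t ∈ Iic t₀, HasDerivAt f (f' t) t) (h0 : ∀ t ∈ Iic t₀, 0 ≤ f' t) :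
    MonotoneOn f (Iic t₀) := by
  apply monotoneOn_of_deriv_nonneg (convex_Iic t₀)
    (fun t ht => (hf t ht).continuousAt.continuousWithinAt)
  · intro t ht
    rw [interior_Iic] at ht
    exact ((hf t (mem_Iic.2 ht.le)).differentiableAt).differentiableWithinAt
  · intro t ht
    rw [interior_Iic] at ht
    rw [(hf t (mem_Iic.2 ht.le)).deriv]
    exact h0 t (mem_Iic.2 ht.le)

private lemma monoOn_Ioc_of_deriv {f f' : ℝ → ℝ} {u v : ℝ}
    (hf : ∀ t ∈ Ioc u v, HasDerivAt f (f' t) t) (h0 : ∀ t ∈ Ioc u v, 0 ≤ f' t) :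
    MonotoneOn f (Ioc u v) := by
  apply monotoneOn_of_deriv_nonneg (convex_Ioc u v)
    (fun t ht => (hf t ht).continuousAt.continuousWithinAt)
  · intro t ht
    rw [interior_Ioc] at ht
    exact ((hf t (Ioo_subset_Ioc_self ht)).differentiableAt).differentiableWithinAt
  · intro t ht
    rw [interior_Ioc] at ht
    rw [(hf t (Ioo_subset_Ioc_self ht)).deriv]
    exact h0 t (Ioo_subset_Ioc_self ht)

private lemma tendsto_atBot_of_monoOn {f : ℝ → ℝ} {t₀ : ℝ}
    (hmono : MonotoneOn f (Iic t₀)) (hpos : ∀ t ∈ Iic t₀, 0 ≤ f t) :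
    ∃ L, 0 ≤ L ∧ Filter.Tendsto f Filter.atBot (nhds L) ∧ ∀ t ∈ Iic t₀, L ≤ f t := by
  set S := f '' Iic t₀ with hS
  have hSne : S.Nonempty := ⟨f t₀, mem_image_of_mem f self_mem_Iic⟩
  have hSbdd : BddBelow S := ⟨0, by rintro s ⟨t, ht, rfl⟩; exact hpos t ht⟩
  have hle : ∀ t ∈ Iic t₀, sInf S ≤ f t := fun t ht => csInf_le hSbdd (mem_image_of_mem f ht)
  refine ⟨sInf S, le_csInf hSne (by rintro s ⟨t, ht, rfl⟩; exact hpos t ht), ?_, hle⟩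
  refine tendsto_order.2 ⟨fun l hl => ?_, fun u hu => ?_⟩
  · filter_upwards [eventually_le_atBot t₀] with t ht
    exact lt_of_lt_of_le hl (hle t ht)
  · obtain ⟨s, hsS, hsu⟩ := exists_lt_of_csInf_lt hSne hu
    obtain ⟨w, hw, rfl⟩ := hsS
    filter_upwards [eventually_le_atBot w] with t ht
    exact lt_of_le_of_lt (hmono (mem_Iic.2 (ht.trans hw)) hw ht) hsu

/-- For a maximal positive solution of the E(2) centrally flat system on
an open interval `(ξ, η)` satisfying `0 ≤ c² − a² ≤ 2α` throughout, the left endpoint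
is `ξ = −∞` (the interval is unbounded below), and as `t → −∞` the solution converges
to an equilibrium `(q, 0, q, 0)` with `q ≥ 0`. -/
theorem e2_case3_left_endpoint_minus_infinity_and_limit
    (I : Set ℝ) (hIopen : IsOpen I) (hIconn : I.OrdConnected) (hne : I.Nonempty)
    (a b c α : ℝ → ℝ)
    (hmax : E2MaximalSolution a b c α I)
    (hapos : ∀ t ∈ I, 0 < a t) (hbpos : ∀ t ∈ I, 0 < b t)
    (hcpos : ∀ t ∈ I, 0 < c t) (hαpos : ∀ t ∈ I, 0 < α t)
    (hineq : ∀ t ∈ I, 0 ≤ (c t) ^ 2 - (a t) ^ 2 ∧ (c t) ^ 2 - (a t) ^ 2 ≤ 2 * α t) :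
    ¬ BddBelow I ∧
    ∃ q : ℝ, 0 ≤ q ∧
      Filter.Tendsto a Filter.atBot (nhds q) ∧
      Filter.Tendsto b Filter.atBot (nhds 0) ∧
      Filter.Tendsto c Filter.atBot (nhds q) ∧
      Filter.Tendsto α Filter.atBot (nhds 0) := by
  obtain ⟨hsys, hmax2⟩ := hmax
  obtain ⟨h1, h2, h3, h4⟩ := hsys
  obtain ⟨t₀, ht₀⟩ := hne
  -- Part 1 : not bounded below
  have hnb : ¬ BddBelow I := by
    intro hbdd
    set ξ := sInf I with hξdef
    have hξ_not : ξ ∉ I := by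
      intro hmem
      obtain ⟨ε, hε, hball⟩ := Metric.isOpen_iff.1 hIopen ξ hmem
      have h2 : ξ - ε / 2 ∈ I := hball (by
        rw [Metric.mem_ball, Real.dist_eq, abs_of_nonpos (by linarith : ξ - ε / 2 - ξ ≤ 0)]
        linarith)
      have := csInf_le hbdd h2
      linarith
    have hξle : ∀ t ∈ I, ξ < t := by
      intro t ht
      rcases lt_or_eq_of_le (csInf_le hbdd ht) with h | h
      · exact h
      · rw [← h] at ht; exact absurd ht hξ_not
    have hξt₀ : ξ < t₀ := hξle t₀ ht₀
    have hIoc : Ioc ξ t₀ ⊆ I := by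
      intro x hx
      obtain ⟨y, hyI, hyx⟩ := exists_lt_of_csInf_lt ⟨t₀, ht₀⟩ hx.1
      exact hIconn.out hyI ht₀ ⟨hyx.le, hx.2⟩
    -- right limits at ξ
    have hmono4 : ∀ (f f' : ℝ → ℝ), (∀ t ∈ I, HasDerivAt f (f' t) t) → (∀ t ∈ I, 0 ≤ f' t) →
        (∀ t ∈ I, 0 < f t) →
        ∃ L, Filter.Tendsto f (nhdsWithin ξ (Ioi ξ)) (nhds L) := by
      intro f f' hf h0 hp
      have hmono : MonotoneOn f (Ioo ξ t₀) :=
        (monoOn_Ioc_of_deriv (fun t ht => hf t (hIoc ht))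
          (fun t ht => h0 t (hIoc ht))).mono Ioo_subset_Ioc_self
      refine ⟨_, MonotoneOn.tendsto_nhdsWithin_Ioo_right (nonempty_Ioo.2 hξt₀) hmono ?_⟩
      exact ⟨0, by rintro s ⟨t, ht, rfl⟩; exact (hp t (hIoc (Ioo_subset_Ioc_self ht))).le⟩
    obtain ⟨A, hA⟩ := hmono4 a _ h1 (fun t ht => by
      have h := (hineq t ht).1; have ha := hapos t ht; nlinarith) hapos
    obtain ⟨B, hB⟩ := hmono4 b _ h2 (fun t ht => by
      have ha := hapos t ht; have hb := hbpos t ht; have hc := hcpos t ht; positivity) hbpos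
    obtain ⟨C, hC⟩ := hmono4 c _ h3 (fun t ht => by
      have h := (hineq t ht).2; have hc := hcpos t ht; nlinarith) hcpos
    obtain ⟨D, hD⟩ := hmono4 α _ h4 (fun t ht => by
      have hα := hαpos t ht; have hc := hcpos t ht; positivity) hαpos
    set X : ℝ → ℝ × ℝ × ℝ × ℝ := fun s => (a s, b s, c s, α s) with hXdef
    set X₀ : ℝ × ℝ × ℝ × ℝ := (A, B, C, D) with hX₀def
    have hXlim : Filter.Tendsto X (nhdsWithin ξ (Ioi ξ)) (nhds X₀) :=
      hA.prodMk_nhds (hB.prodMk_nhds (hC.prodMk_nhds hD))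
    have hXder : ∀ t ∈ I, HasDerivAt X (F4 (X t)) t :=
      fun t ht => hasDerivAt_X4 ⟨h1, h2, h3, h4⟩ ht
    -- local solution through (ξ, X₀)
    obtain ⟨g, hgξ, ε₀, hε₀, hg⟩ :=
      ContDiffAt.exists_forall_mem_closedBall_exists_eq_forall_mem_Ioo_hasDerivAt₀ (F4_contDiff.contDiffAt (x := X₀)) ξ
    -- Lipschitz ball around X₀
    obtain ⟨K, s, hs, hlip⟩ := (F4_contDiff.contDiffAt (x := X₀)).exists_lipschitzOnWith
    obtain ⟨r, hr, hballs⟩ := Metric.mem_nhds_iff.1 hs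
    have hlipb : LipschitzOnWith K F4 (Metric.ball X₀ r) := hlip.mono hballs
    -- g stays in the ball near ξ
    have hgtend : Filter.Tendsto g (nhds ξ) (nhds X₀) := by
      have := (hg ξ ⟨by linarith, by linarith⟩).continuousAt
      rwa [ContinuousAt, hgξ] at this
    obtain ⟨δ₁, hδ₁, hgb⟩ := Metric.eventually_nhds_iff.1
      (hgtend.eventually (eventually_of_mem (Metric.ball_mem_nhds X₀ hr) fun x hx => hx))
    -- X stays in the ball just right of ξ
    have hXball : {t | X t ∈ Metric.ball X₀ r} ∈ nhdsWithin ξ (Ioi ξ) :=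
      hXlim.eventually (eventually_of_mem (Metric.ball_mem_nhds X₀ hr) fun x hx => hx)
    obtain ⟨u, huξ, hXu⟩ := mem_nhdsGT_iff_exists_Ioc_subset.1 hXball
    -- choose t₁
    set t₁ : ℝ := min (min (ξ + ε₀ / 2) (ξ + δ₁ / 2)) (min u t₀) with ht₁def
    have ht₁ξ : ξ < t₁ := lt_min (lt_min (by linarith) (by linarith)) (lt_min huξ hξt₀)
    have ht₁ε : t₁ < ξ + ε₀ := lt_of_le_of_lt ((min_le_left _ _).trans (min_le_left _ _)) (by linarith)
    have ht₁δ : t₁ < ξ + δ₁ := lt_of_le_of_lt ((min_le_left _ _).trans (min_le_right _ _)) (by linarith)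
    have ht₁u : t₁ ≤ u := (min_le_right _ _).trans (min_le_left _ _)
    have ht₁t₀ : t₁ ≤ t₀ := (min_le_right _ _).trans (min_le_right _ _)
    have hIoct₁ : Ioc ξ t₁ ⊆ I := fun x hx => hIoc ⟨hx.1, hx.2.trans ht₁t₀⟩
    -- the bar extension of X
    set Xb : ℝ → ℝ × ℝ × ℝ × ℝ := fun t => if ξ < t then X t else X₀ with hXbdef
    have hXbξ : Xb ξ = X₀ := if_neg (lt_irrefl ξ)
    have hXbtend : Filter.Tendsto Xb (nhdsWithin ξ (Ioi ξ)) (nhds X₀) :=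
      hXlim.congr' (eventually_of_mem self_mem_nhdsWithin fun y hy => (if_pos hy).symm)
    have hXbeq : ∀ {t : ℝ}, ξ < t → Xb t = X t := fun h => if_pos h
    have hXbD : ∀ {t : ℝ}, t ∈ I → HasDerivAt Xb (F4 (X t)) t := by
      intro t htI
      exact (hXder t htI).congr_of_eventuallyEq
        (eventually_of_mem (Ioi_mem_nhds (hξle t htI)) fun z hz => if_pos hz)
    -- uniqueness on [ξ, t₁]
    have hEq : EqOn Xb g (Icc ξ t₁) := by
      apply ODE_solution_unique_of_mem_Icc_right (v := fun _ => F4)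
        (s := fun _ => Metric.ball X₀ r) (fun _ _ => hlipb)
      · -- ContinuousOn Xb (Icc ξ t₁)
        intro t ht
        rcases eq_or_lt_of_le ht.1 with h | h
        · subst h
          have : ContinuousWithinAt Xb (Ici ξ) ξ := by
            rw [← continuousWithinAt_Ioi_iff_Ici, ContinuousWithinAt, hXbξ]
            exact hXbtend
          exact this.mono Icc_subset_Ici_self
        · have htI : t ∈ I := hIoct₁ ⟨h, ht.2⟩
          exact (hXbD htI).continuousAt.continuousWithinAt
      · -- derivatives on Ico
        intro t ht
        rcases eq_or_lt_of_le ht.1 with h | h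
        · subst h
          rw [hXbξ]
          apply hasDerivWithinAt_Ici_of_tendsto_deriv (s := Ioo ξ t₁)
          · intro y hy
            exact (hXbD (hIoct₁ (Ioo_subset_Ioc_self hy))).differentiableAt.differentiableWithinAt
          · exact ContinuousWithinAt.mono (by rw [ContinuousWithinAt, hXbξ]; exact hXbtend)
              Ioo_subset_Ioi_self
          · exact Ioo_mem_nhdsGT_of_mem ⟨le_refl ξ, ht.2⟩
          · have hF4c : Continuous F4 := F4_contDiff.continuous
            have hcomp : Filter.Tendsto (fun y => F4 (X y)) (nhdsWithin ξ (Ioi ξ)) (nhds (F4 X₀)) :=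
              (hF4c.tendsto X₀).comp hXlim
            apply hcomp.congr'
            filter_upwards [Ioo_mem_nhdsGT_of_mem ⟨le_refl ξ, ht.2⟩] with y hy
            exact ((hXbD (hIoct₁ ⟨hy.1, hy.2.le⟩)).deriv).symm
        · have htI : t ∈ I := hIoct₁ ⟨h, ht.2.le⟩
          have hD' := hXbD htI
          rw [show Xb t = X t from if_pos h]
          exact hD'.hasDerivWithinAt
      · -- Xb in ball on Ico
        intro t ht
        rcases eq_or_lt_of_le ht.1 with h | h
        · subst h; rw [hXbξ]; exact Metric.mem_ball_self hr
        · rw [hXbeq h]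
          exact hXu ⟨h, ht.2.le.trans ht₁u⟩
      · -- ContinuousOn g
        intro t ht
        exact (hg t ⟨by linarith [ht.1], lt_of_le_of_lt ht.2 ht₁ε⟩).continuousAt.continuousWithinAt
      · intro t ht
        exact (hg t ⟨by linarith [ht.1], ht.2.trans ht₁ε⟩).hasDerivWithinAt
      · intro t ht
        apply hgb
        rw [Real.dist_eq, abs_of_nonneg (by linarith [ht.1] : (0:ℝ) ≤ t - ξ)]
        have := ht.2
        linarith
      · rw [hXbξ, hgξ]
    -- glued solution
    set Z : ℝ → ℝ × ℝ × ℝ × ℝ := fun t => if ξ < t then X t else g t with hZdef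
    have hZg : EqOn Z g (Ioc (ξ - ε₀) t₁) := by
      intro t ht
      by_cases h : ξ < t
      · have := hEq ⟨h.le, ht.2⟩
        rw [hXbeq h] at this
        simpa [hZdef, if_pos h] using this
      · simp [hZdef, if_neg h]
    set J : Set ℝ := I ∪ Ioo (ξ - ε₀) t₁ with hJdef
    have hZderiv : ∀ t ∈ J, HasDerivAt Z (F4 (Z t)) t := by
      intro t ht
      by_cases h : ξ < t
      · have htI : t ∈ I := by
          rcases ht with h' | h'
          · exact h'
          · exact hIoct₁ ⟨h, h'.2.le⟩
        have hd := (hXder t htI).congr_of_eventuallyEq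
          (eventually_of_mem (Ioi_mem_nhds h) fun z hz => (if_pos hz : Z z = X z))
        rwa [show Z t = X t from if_pos h]
      · have htO : t ∈ Ioo (ξ - ε₀) t₁ := by
          rcases ht with h' | h'
          · exact absurd (hξle t h') h
          · exact h'
        have hgt : HasDerivAt g (F4 (g t)) t := hg t ⟨htO.1, lt_trans htO.2 ht₁ε⟩
        have heq : Z =ᶠ[nhds t] g := by
          filter_upwards [Ioo_mem_nhds htO.1 htO.2] with y hy
          exact hZg ⟨hy.1, hy.2.le⟩
        have hd := hgt.congr_of_eventuallyEq heq
        rwa [show Z t = g t from if_neg h]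
    have hJopen : IsOpen J := hIopen.union isOpen_Ioo
    have hJconn : J.OrdConnected := by
      constructor
      intro x hx y hy z hz
      by_cases hzI : z ∈ I
      · exact Or.inl hzI
      by_cases hzξ : ξ < z
      · obtain ⟨w, hwI, hwz⟩ := exists_lt_of_csInf_lt ⟨t₀, ht₀⟩ hzξ
        rcases hy with h' | h'
        · exact absurd (hIconn.out hwI h' ⟨hwz.le, hz.2⟩) hzI
        · exact Or.inr ⟨by linarith, lt_of_le_of_lt hz.2 h'.2⟩
      · push_neg at hzξ
        refine Or.inr ⟨?_, lt_of_le_of_lt hzξ ht₁ξ⟩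
        have hx' : ξ - ε₀ < x := by
          rcases hx with h' | h'
          · have := hξle x h'; linarith
          · exact h'.1
        linarith [hz.1]
    have hne' : I ≠ J := by
      intro h
      exact hξ_not (by rw [h]; exact Or.inr ⟨by linarith, ht₁ξ⟩)
    apply hmax2 J hJopen hJconn subset_union_left hne'
    refine ⟨fun t => (Z t).1, fun t => (Z t).2.1, fun t => (Z t).2.2.1, fun t => (Z t).2.2.2,
      ?_, ?_, ?_, ?_, ?_⟩
    · have hcomp := fun (t : ℝ) (ht : t ∈ J) => hasDerivAt_components (hZderiv t ht)
      exact ⟨fun t ht => (hcomp t ht).1, fun t ht => (hcomp t ht).2.1,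
             fun t ht => (hcomp t ht).2.2.1, fun t ht => (hcomp t ht).2.2.2⟩
    · intro t htI; simp only [hZdef, if_pos (hξle t htI)]; rfl
    · intro t htI; simp only [hZdef, if_pos (hξle t htI)]; rfl
    · intro t htI; simp only [hZdef, if_pos (hξle t htI)]; rfl
    · intro t htI; simp only [hZdef, if_pos (hξle t htI)]; rfl
  refine ⟨hnb, ?_⟩
  -- Part 2 : limits
  have hIic : Iic t₀ ⊆ I := by
    intro x hx
    obtain ⟨y, hyI, hyx⟩ := not_bddBelow_iff.1 hnb x
    exact hIconn.out hyI ht₀ ⟨hyx.le, hx⟩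
  have hamono : MonotoneOn a (Iic t₀) := by
    apply monoOn_Iic_of_deriv (fun t ht => h1 t (hIic ht))
    intro t ht
    have h := (hineq t (hIic ht)).1
    have ha := hapos t (hIic ht)
    nlinarith
  have hcmono : MonotoneOn c (Iic t₀) := by
    apply monoOn_Iic_of_deriv (fun t ht => h3 t (hIic ht))
    intro t ht
    have h := (hineq t (hIic ht)).2
    have hc := hcpos t (hIic ht)
    nlinarith
  obtain ⟨A, hA0, hAtend, hAle⟩ :=
    tendsto_atBot_of_monoOn hamono (fun t ht => (hapos t (hIic ht)).le)
  obtain ⟨C, hC0, hCtend, hCle⟩ :=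
    tendsto_atBot_of_monoOn hcmono (fun t ht => (hcpos t (hIic ht)).le)
  by_cases hCpos : 0 < C
  · -- exponential decay of α and b
    have hφα : MonotoneOn (fun t => Real.log (α t) - C ^ 2 * t) (Iic t₀) := by
      apply monoOn_Iic_of_deriv (f' := fun t => (c t) ^ 2 - C ^ 2)
      · intro t ht
        have hlog := (h4 t (hIic ht)).log (ne_of_gt (hαpos t (hIic ht)))
        have hid : HasDerivAt (fun s : ℝ => C ^ 2 * s) (C ^ 2) t := by
          simpa using (hasDerivAt_id t).const_mul (C ^ 2)
        have hαne := ne_of_gt (hαpos t (hIic ht))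
        refine (hlog.sub hid).congr_deriv ?_
        field_simp
      · intro t ht
        have := hCle t ht
        nlinarith
    have hφb : MonotoneOn (fun t => Real.log (b t) - C ^ 2 / 2 * t) (Iic t₀) := by
      apply monoOn_Iic_of_deriv (f' := fun t => ((a t) ^ 2 + (c t) ^ 2) / 2 - C ^ 2 / 2)
      · intro t ht
        have hlog := (h2 t (hIic ht)).log (ne_of_gt (hbpos t (hIic ht)))
        have hid : HasDerivAt (fun s : ℝ => C ^ 2 / 2 * s) (C ^ 2 / 2) t := by
          simpa using (hasDerivAt_id t).const_mul (C ^ 2 / 2)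
        have hbne := ne_of_gt (hbpos t (hIic ht))
        refine (hlog.sub hid).congr_deriv ?_
        field_simp
      · intro t ht
        have hc := hCle t ht
        have ha := hapos t (hIic ht)
        nlinarith
    have key : ∀ (f : ℝ → ℝ) (r : ℝ), 0 < r → (∀ t ∈ I, 0 < f t) →
        MonotoneOn (fun t => Real.log (f t) - r * t) (Iic t₀) →
        Filter.Tendsto f Filter.atBot (nhds 0) := by
      intro f r hr hfpos hmono
      have hbound : ∀ t ∈ Iic t₀, f t ≤ f t₀ * Real.exp (r * (t - t₀)) := by
        intro t ht
        have hm := hmono ht self_mem_Iic ht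
        have hft : 0 < f t := hfpos t (hIic ht)
        have hft₀ : 0 < f t₀ := hfpos t₀ (hIic self_mem_Iic)
        have hlog : Real.log (f t) ≤ Real.log (f t₀) + r * (t - t₀) := by
          simp only at hm; linarith
        calc f t = Real.exp (Real.log (f t)) := (Real.exp_log hft).symm
          _ ≤ Real.exp (Real.log (f t₀) + r * (t - t₀)) := Real.exp_le_exp.2 hlog
          _ = f t₀ * Real.exp (r * (t - t₀)) := by rw [Real.exp_add, Real.exp_log hft₀]
      have hexp : Filter.Tendsto (fun t => f t₀ * Real.exp (r * (t - t₀))) Filter.atBot (nhds 0) := by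
        rw [show (0:ℝ) = f t₀ * 0 by ring]
        apply Filter.Tendsto.const_mul
        apply Real.tendsto_exp_atBot.comp
        have h1 : Filter.Tendsto (fun t : ℝ => t - t₀) Filter.atBot Filter.atBot := by
          simpa [sub_eq_add_neg] using tendsto_atBot_add_const_right Filter.atBot (-t₀) tendsto_id
        exact h1.const_mul_atBot hr
      apply tendsto_of_tendsto_of_tendsto_of_le_of_le' tendsto_const_nhds hexp
      · filter_upwards [eventually_le_atBot t₀] with t ht
        exact (hfpos t (hIic ht)).le
      · filter_upwards [eventually_le_atBot t₀] with t ht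
        exact hbound t ht
    have hαtend0 : Filter.Tendsto α Filter.atBot (nhds 0) :=
      key α (C ^ 2) (by positivity) hαpos hφα
    have hbtend0 : Filter.Tendsto b Filter.atBot (nhds 0) :=
      key b (C ^ 2 / 2) (by positivity) hbpos hφb
    have hd : Filter.Tendsto (fun t => (c t) ^ 2 - (a t) ^ 2) Filter.atBot
        (nhds (C ^ 2 - A ^ 2)) := (hCtend.pow 2).sub (hAtend.pow 2)
    have hge : 0 ≤ C ^ 2 - A ^ 2 := by
      apply ge_of_tendsto hd
      filter_upwards [eventually_le_atBot t₀] with t ht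
      exact (hineq t (hIic ht)).1
    have hle2 : C ^ 2 - A ^ 2 ≤ 0 := by
      have h2α : Filter.Tendsto (fun t => 2 * α t) Filter.atBot (nhds 0) := by
        simpa using hαtend0.const_mul 2
      have := le_of_tendsto_of_tendsto hd h2α ?_
      · simpa using this
      · filter_upwards [eventually_le_atBot t₀] with t ht
        exact (hineq t (hIic ht)).2
    have hAC : A = C := le_antisymm (by nlinarith) (by nlinarith)
    exact ⟨A, hA0, hAtend, hbtend0, by rwa [← hAC] at hCtend, hαtend0⟩
  · -- C = 0 case
    have hC : C = 0 := le_antisymm (not_lt.1 hCpos) hC0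
    have hac : ∀ᶠ t in Filter.atBot, a t ≤ c t := by
      filter_upwards [eventually_le_atBot t₀] with t ht
      have h := (hineq t (hIic ht)).1
      have ha := hapos t (hIic ht)
      have hc := hcpos t (hIic ht)
      nlinarith
    have hA : A = 0 := le_antisymm
      (by simpa [hC] using le_of_tendsto_of_tendsto hAtend hCtend hac) hA0
    -- squeeze via comparison with a
    have key : ∀ (f : ℝ → ℝ), (∀ t ∈ I, 0 < f t) →
        MonotoneOn (fun t => Real.log (f t) - Real.log (a t)) (Iic t₀) →
        Filter.Tendsto f Filter.atBot (nhds 0) := by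
      intro f hfpos hmono
      have hbound : ∀ t ∈ Iic t₀, f t ≤ f t₀ / a t₀ * a t := by
        intro t ht
        have hm := hmono ht self_mem_Iic ht
        have hft : 0 < f t := hfpos t (hIic ht)
        have hft₀ : 0 < f t₀ := hfpos t₀ (hIic self_mem_Iic)
        have hat : 0 < a t := hapos t (hIic ht)
        have hat₀ : 0 < a t₀ := hapos t₀ (hIic self_mem_Iic)
        have hlog : Real.log (f t) ≤ Real.log (f t₀) - Real.log (a t₀) + Real.log (a t) := by
          simp only at hm; linarith
        calc f t = Real.exp (Real.log (f t)) := (Real.exp_log hft).symm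
          _ ≤ Real.exp (Real.log (f t₀) - Real.log (a t₀) + Real.log (a t)) :=
            Real.exp_le_exp.2 hlog
          _ = f t₀ / a t₀ * a t := by
            rw [Real.exp_add, Real.exp_sub, Real.exp_log hft₀, Real.exp_log hat₀,
              Real.exp_log hat]
      have hlim : Filter.Tendsto (fun t => f t₀ / a t₀ * a t) Filter.atBot (nhds 0) := by
        have := hAtend.const_mul (f t₀ / a t₀)
        rwa [hA, mul_zero] at this
      apply tendsto_of_tendsto_of_tendsto_of_le_of_le' tendsto_const_nhds hlim
      · filter_upwards [eventually_le_atBot t₀] with t ht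
        exact (hfpos t (hIic ht)).le
      · filter_upwards [eventually_le_atBot t₀] with t ht
        exact hbound t ht
    have hφb : MonotoneOn (fun t => Real.log (b t) - Real.log (a t)) (Iic t₀) := by
      apply monoOn_Iic_of_deriv (f' := fun t => (a t) ^ 2)
      · intro t ht
        have hlogb := (h2 t (hIic ht)).log (ne_of_gt (hbpos t (hIic ht)))
        have hloga := (h1 t (hIic ht)).log (ne_of_gt (hapos t (hIic ht)))
        have hbne := ne_of_gt (hbpos t (hIic ht))
        have hane := ne_of_gt (hapos t (hIic ht))
        refine (hlogb.sub hloga).congr_deriv ?_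
        field_simp
        ring
      · intro t _
        positivity
    have hφα : MonotoneOn (fun t => Real.log (α t) - Real.log (a t)) (Iic t₀) := by
      apply monoOn_Iic_of_deriv (f' := fun t => ((c t) ^ 2 + (a t) ^ 2) / 2)
      · intro t ht
        have hlogα := (h4 t (hIic ht)).log (ne_of_gt (hαpos t (hIic ht)))
        have hloga := (h1 t (hIic ht)).log (ne_of_gt (hapos t (hIic ht)))
        have hαne := ne_of_gt (hαpos t (hIic ht))
        have hane := ne_of_gt (hapos t (hIic ht))
        refine (hlogα.sub hloga).congr_deriv ?_
        field_simp
        ring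
      · intro t _
        positivity
    have hbtend0 : Filter.Tendsto b Filter.atBot (nhds 0) := key b hbpos hφb
    have hαtend0 : Filter.Tendsto α Filter.atBot (nhds 0) := key α hαpos hφα
    exact ⟨0, le_refl 0, by rwa [hA] at hAtend, hbtend0, by rwa [hC] at hCtend, hαtend0⟩
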